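/- Let 0 < v_1 < v_2 < … < v_k be reals, let M be the k×k matrix with M_{ij} = √( v_{min(i,j)} / v_{max(i,j)} ), and let s ∈ {−1, +1}^k be any sign vector with S = diag(s). Then M is invertible and every entry of S M⁻¹ S 𝟙 is nonnegative: Σ_j s_i (M⁻¹)_{ij} s_j ≥ 0 for every i. Consequently the diagonal-dominance condition S_A (X_AᵀX_A)⁻¹ S_A 𝟙 ≥ 0 holds for every subset of piecewise constant (indicator) basis predictors and every choice of signs. -/

import Mathlib

private lemma sum_eq_sum_subset' {n : ℕ} (f : Fin n → ℝ) (t : Finset (Fin n))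
    (h : ∀ l, l ∉ t → f l = 0) : ∑ l, f l = ∑ l ∈ t, f l :=
  (Finset.sum_subset t.subset_univ fun x _ hx => h x hx).symm

noncomputable def pvf (n : ℕ) (v : Fin (n+1) → ℝ) (i : Fin (n+1)) : ℝ :=
  if (i:ℕ) = 0 then 0 else v ⟨(i:ℕ)-1, Nat.lt_of_le_of_lt (Nat.sub_le _ _) i.isLt⟩

noncomputable def qf (n : ℕ) (v : Fin (n+1) → ℝ) (i : Fin (n+1)) : ℝ :=
  1 / (v i - pvf n v i)

noncomputable def nqf (n : ℕ) (v : Fin (n+1) → ℝ) (i : Fin (n+1)) : ℝ :=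
  if h : (i:ℕ) < n then qf n v ⟨(i:ℕ)+1, by omega⟩ else 0

noncomputable def triN (n : ℕ) (v : Fin (n+1) → ℝ) :
    Matrix (Fin (n+1)) (Fin (n+1)) ℝ := fun i j =>
  if (i:ℕ) = (j:ℕ) then v i * (qf n v i + nqf n v i)
  else if (i:ℕ)+1 = (j:ℕ) then -(Real.sqrt (v i) * Real.sqrt (v j) * qf n v j)
  else if (j:ℕ)+1 = (i:ℕ) then -(Real.sqrt (v i) * Real.sqrt (v j) * qf n v i)
  else 0

private lemma qf_eq {n : ℕ} (v : Fin (n+1) → ℝ) {p j : Fin (n+1)}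
    (h : (p:ℕ)+1 = (j:ℕ)) : qf n v j = 1 / (v j - v p) := by
  have h0 : ¬((j:ℕ) = 0) := by omega
  rw [qf, pvf, if_neg h0]
  have e : (⟨(j:ℕ)-1, Nat.lt_of_le_of_lt (Nat.sub_le _ _) j.isLt⟩ : Fin (n+1)) = p :=
    Fin.ext (by simp only [Fin.val_mk]; omega)
  rw [e]

private lemma qf_eq0 {n : ℕ} (v : Fin (n+1) → ℝ) {j : Fin (n+1)}
    (h : (j:ℕ) = 0) : qf n v j = 1 / v j := by
  rw [qf, pvf, if_pos h, sub_zero]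

private lemma nqf_eq {n : ℕ} (v : Fin (n+1) → ℝ) {j q : Fin (n+1)}
    (h : (j:ℕ)+1 = (q:ℕ)) : nqf n v j = qf n v q := by
  have hlt : (j:ℕ) < n := by omega
  rw [nqf, dif_pos hlt]
  congr 1
  exact Fin.ext (by simp only [Fin.val_mk]; omega)

private lemma nqf_eq0 {n : ℕ} (v : Fin (n+1) → ℝ) {j : Fin (n+1)}
    (h : ¬ ((j:ℕ) < n)) : nqf n v j = 0 := by
  rw [nqf, dif_neg h]

private lemma triN_diag {n : ℕ} (v : Fin (n+1) → ℝ) (j : Fin (n+1)) :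
    triN n v j j = v j * (qf n v j + nqf n v j) := by
  simp [triN]

private lemma triN_sub {n : ℕ} (v : Fin (n+1) → ℝ) {a b : Fin (n+1)}
    (h : (a:ℕ)+1 = (b:ℕ)) :
    triN n v a b = -(Real.sqrt (v a) * Real.sqrt (v b) * qf n v b) := by
  simp only [triN]
  rw [if_neg (by omega), if_pos h]

private lemma triN_sup {n : ℕ} (v : Fin (n+1) → ℝ) {a b : Fin (n+1)}
    (h : (a:ℕ)+1 = (b:ℕ)) :
    triN n v b a = -(Real.sqrt (v b) * Real.sqrt (v a) * qf n v b) := by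
  simp only [triN]
  rw [if_neg (by omega), if_neg (by omega), if_pos h]

private lemma triN_off {n : ℕ} (v : Fin (n+1) → ℝ) {l j : Fin (n+1)}
    (h1 : (l:ℕ) ≠ (j:ℕ)) (h2 : (l:ℕ)+1 ≠ (j:ℕ)) (h3 : (j:ℕ)+1 ≠ (l:ℕ)) :
    triN n v l j = 0 := by
  simp only [triN]
  rw [if_neg h1, if_neg h2, if_neg h3]

private lemma triN_mul {n : ℕ} (v : Fin (n+1) → ℝ) (hpos : ∀ i, 0 < v i)
    (hmono : StrictMono v) (M : Matrix (Fin (n+1)) (Fin (n+1)) ℝ)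
    (hM : ∀ i j, M i j = Real.sqrt (v (min i j) / v (max i j))) :
    M * triN n v = 1 := by
  have ha : ∀ i, 0 < Real.sqrt (v i) := fun i => Real.sqrt_pos.2 (hpos i)
  have hasq : ∀ i, Real.sqrt (v i) ^ 2 = v i := fun i => Real.sq_sqrt (hpos i).le
  have halt : ∀ i j : Fin (n+1), (i:ℕ) < (j:ℕ) → Real.sqrt (v i) < Real.sqrt (v j) :=
    fun i j h => Real.sqrt_lt_sqrt (hpos i).le (hmono (Fin.lt_def.mpr h))
  have hMle : ∀ i j : Fin (n+1), (i:ℕ) ≤ (j:ℕ) →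
      M i j = Real.sqrt (v i) / Real.sqrt (v j) := by
    intro i j h
    have hij : i ≤ j := Fin.le_def.mpr h
    rw [hM, min_eq_left hij, max_eq_right hij, Real.sqrt_div (hpos i).le]
  have hMge : ∀ i j : Fin (n+1), (j:ℕ) ≤ (i:ℕ) →
      M i j = Real.sqrt (v j) / Real.sqrt (v i) := by
    intro i j h
    have hij : j ≤ i := Fin.le_def.mpr h
    rw [hM, min_eq_right hij, max_eq_left hij, Real.sqrt_div (hpos j).le]
  ext i j
  rw [Matrix.mul_apply, Matrix.one_apply]
  by_cases hj0 : (j:ℕ) = 0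
  · by_cases hjn : (j:ℕ) < n
    · -- j = 0 < n : support {j, jn}
      obtain ⟨jn, hjnv⟩ : ∃ x : Fin (n+1), (x:ℕ) = (j:ℕ)+1 := ⟨⟨(j:ℕ)+1, by omega⟩, rfl⟩
      have hsum : (∑ l, M i l * triN n v l j)
          = ∑ l ∈ ({j, jn} : Finset (Fin (n+1))), M i l * triN n v l j := by
        apply sum_eq_sum_subset'
        intro l hl
        simp only [Finset.mem_insert, Finset.mem_singleton] at hl
        push_neg at hl
        have e1 : (l:ℕ) ≠ (j:ℕ) := fun h => hl.1 (Fin.ext h)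
        have e3 : (j:ℕ)+1 ≠ (l:ℕ) := fun h => hl.2 (Fin.ext (by omega))
        rw [triN_off v e1 (by omega) e3, mul_zero]
      have hne : j ≠ jn := by
        rw [Fin.ne_iff_vne]; omega
      rw [hsum, Finset.sum_pair hne, triN_diag, triN_sup v hjnv.symm,
          nqf_eq v hjnv.symm, qf_eq0 v hj0, qf_eq v hjnv.symm]
      have hd2 : (0:ℝ) < v jn - v j := sub_pos.2 (hmono (Fin.lt_def.2 (by omega)))
      rcases Nat.lt_trichotomy (i:ℕ) (j:ℕ) with hij | hij | hij
      · omega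
      · have hij' : i = j := Fin.ext hij
        subst hij'
        rw [if_pos rfl, hMle i i le_rfl, hMle i jn (by omega)]
        set B := Real.sqrt (v i) with hB
        set C := Real.sqrt (v jn) with hC
        have hB2 : B ^ 2 = v i := hasq i
        have hC2 : C ^ 2 = v jn := hasq jn
        have hBp : 0 < B := ha i
        have hCp : 0 < C := ha jn
        have hd2' : C ^ 2 - B ^ 2 ≠ 0 := by rw [hB2, hC2]; exact hd2.ne'
        rw [← hB2, ← hC2]
        field_simp
        ring
      · have hne2 : ¬ i = j := by
          intro h; rw [h] at hij; omega
        rw [if_neg hne2, hMge i j (by omega), hMge i jn (by omega)]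
        set B := Real.sqrt (v j) with hB
        set C := Real.sqrt (v jn) with hC
        set D := Real.sqrt (v i) with hD
        have hB2 : B ^ 2 = v j := hasq j
        have hC2 : C ^ 2 = v jn := hasq jn
        have hBp : 0 < B := ha j
        have hCp : 0 < C := ha jn
        have hDp : 0 < D := ha i
        have hd2' : C ^ 2 - B ^ 2 ≠ 0 := by rw [hB2, hC2]; exact hd2.ne'
        rw [← hB2, ← hC2]
        field_simp
        ring
    · -- j = 0, n = 0 : support {j}
      have hn0 : n = 0 := by omega
      have hij' : i = j := Fin.ext (by omega)
      subst hij'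
      have hsum : (∑ l, M i l * triN n v l i)
          = ∑ l ∈ ({i} : Finset (Fin (n+1))), M i l * triN n v l i := by
        apply sum_eq_sum_subset'
        intro l hl
        simp only [Finset.mem_singleton] at hl
        have e1 : (l:ℕ) ≠ (i:ℕ) := fun h => hl (Fin.ext h)
        rw [triN_off v e1 (by omega) (by omega), mul_zero]
      rw [hsum, Finset.sum_singleton, triN_diag, nqf_eq0 v (by omega), qf_eq0 v hj0,
          if_pos rfl, hMle i i le_rfl]
      have hvp := hpos i
      have hBp := ha i
      field_simp
      ring
  · -- j.val > 0
    obtain ⟨jm, hjmv⟩ : ∃ x : Fin (n+1), (x:ℕ)+1 = (j:ℕ) :=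
      ⟨⟨(j:ℕ)-1, by omega⟩, by simp only [Fin.val_mk]; omega⟩
    have hd1 : (0:ℝ) < v j - v jm := sub_pos.2 (hmono (Fin.lt_def.2 (by omega)))
    by_cases hjn : (j:ℕ) < n
    · -- interior j : support {jm, j, jn}
      obtain ⟨jn, hjnv⟩ : ∃ x : Fin (n+1), (x:ℕ) = (j:ℕ)+1 := ⟨⟨(j:ℕ)+1, by omega⟩, rfl⟩
      have hd2 : (0:ℝ) < v jn - v j := sub_pos.2 (hmono (Fin.lt_def.2 (by omega)))
      have hsum : (∑ l, M i l * triN n v l j)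
          = ∑ l ∈ ({jm, j, jn} : Finset (Fin (n+1))), M i l * triN n v l j := by
        apply sum_eq_sum_subset'
        intro l hl
        simp only [Finset.mem_insert, Finset.mem_singleton] at hl
        push_neg at hl
        have e1 : (l:ℕ) ≠ (j:ℕ) := fun h => hl.2.1 (Fin.ext h)
        have e2 : (l:ℕ)+1 ≠ (j:ℕ) := fun h => hl.1 (Fin.ext (by omega))
        have e3 : (j:ℕ)+1 ≠ (l:ℕ) := fun h => hl.2.2 (Fin.ext (by omega))
        rw [triN_off v e1 e2 e3, mul_zero]
      rw [hsum, Finset.sum_insert (by simp only [Finset.mem_insert,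
            Finset.mem_singleton, Fin.ext_iff]; omega),
          Finset.sum_pair (by rw [Fin.ne_iff_vne]; omega),
          triN_diag, triN_sub v hjmv, triN_sup v hjnv.symm,
          nqf_eq v hjnv.symm, qf_eq v hjmv, qf_eq v hjnv.symm]
      rcases Nat.lt_trichotomy (i:ℕ) (j:ℕ) with hij | hij | hij
      · have hne2 : ¬ i = j := by intro h; rw [h] at hij; omega
        rw [if_neg hne2, hMle i jm (by omega), hMle i j (by omega), hMle i jn (by omega)]
        set A := Real.sqrt (v jm) with hA
        set B := Real.sqrt (v j) with hB
        set C := Real.sqrt (v jn) with hC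
        set D := Real.sqrt (v i) with hD
        have hA2 : A ^ 2 = v jm := hasq jm
        have hB2 : B ^ 2 = v j := hasq j
        have hC2 : C ^ 2 = v jn := hasq jn
        have hAp : 0 < A := ha jm
        have hBp : 0 < B := ha j
        have hCp : 0 < C := ha jn
        have hDp : 0 < D := ha i
        have hd1' : B ^ 2 - A ^ 2 ≠ 0 := by rw [hA2, hB2]; exact hd1.ne'
        have hd2' : C ^ 2 - B ^ 2 ≠ 0 := by rw [hB2, hC2]; exact hd2.ne'
        rw [← hA2, ← hB2, ← hC2]
        field_simp
        ring
      · have hij' : i = j := Fin.ext hij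
        subst hij'
        rw [if_pos rfl, hMge i jm (by omega), hMle i i le_rfl, hMle i jn (by omega)]
        set A := Real.sqrt (v jm) with hA
        set B := Real.sqrt (v i) with hB
        set C := Real.sqrt (v jn) with hC
        have hA2 : A ^ 2 = v jm := hasq jm
        have hB2 : B ^ 2 = v i := hasq i
        have hC2 : C ^ 2 = v jn := hasq jn
        have hAp : 0 < A := ha jm
        have hBp : 0 < B := ha i
        have hCp : 0 < C := ha jn
        have hd1' : B ^ 2 - A ^ 2 ≠ 0 := by rw [hA2, hB2]; exact hd1.ne'
        have hd2' : C ^ 2 - B ^ 2 ≠ 0 := by rw [hB2, hC2]; exact hd2.ne'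
        rw [← hA2, ← hB2, ← hC2]
        field_simp
        ring
      · have hne2 : ¬ i = j := by intro h; rw [h] at hij; omega
        rw [if_neg hne2, hMge i jm (by omega), hMge i j (by omega), hMge i jn (by omega)]
        set A := Real.sqrt (v jm) with hA
        set B := Real.sqrt (v j) with hB
        set C := Real.sqrt (v jn) with hC
        set D := Real.sqrt (v i) with hD
        have hA2 : A ^ 2 = v jm := hasq jm
        have hB2 : B ^ 2 = v j := hasq j
        have hC2 : C ^ 2 = v jn := hasq jn
        have hAp : 0 < A := ha jm
        have hBp : 0 < B := ha j
        have hCp : 0 < C := ha jn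
        have hDp : 0 < D := ha i
        have hd1' : B ^ 2 - A ^ 2 ≠ 0 := by rw [hA2, hB2]; exact hd1.ne'
        have hd2' : C ^ 2 - B ^ 2 ≠ 0 := by rw [hB2, hC2]; exact hd2.ne'
        rw [← hA2, ← hB2, ← hC2]
        field_simp
        ring
    · -- j = last > 0 : support {jm, j}
      have hsum : (∑ l, M i l * triN n v l j)
          = ∑ l ∈ ({jm, j} : Finset (Fin (n+1))), M i l * triN n v l j := by
        apply sum_eq_sum_subset'
        intro l hl
        simp only [Finset.mem_insert, Finset.mem_singleton] at hl
        push_neg at hl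
        have e1 : (l:ℕ) ≠ (j:ℕ) := fun h => hl.2 (Fin.ext h)
        have e2 : (l:ℕ)+1 ≠ (j:ℕ) := fun h => hl.1 (Fin.ext (by omega))
        have e3 : (j:ℕ)+1 ≠ (l:ℕ) := by
          have := l.isLt; omega
        rw [triN_off v e1 e2 e3, mul_zero]
      rw [hsum, Finset.sum_pair (by rw [Fin.ne_iff_vne]; omega),
          triN_diag, triN_sub v hjmv, nqf_eq0 v hjn, qf_eq v hjmv]
      rcases Nat.lt_trichotomy (i:ℕ) (j:ℕ) with hij | hij | hij
      · have hne2 : ¬ i = j := by intro h; rw [h] at hij; omega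
        rw [if_neg hne2, hMle i jm (by omega), hMle i j (by omega)]
        set A := Real.sqrt (v jm) with hA
        set B := Real.sqrt (v j) with hB
        set D := Real.sqrt (v i) with hD
        have hA2 : A ^ 2 = v jm := hasq jm
        have hB2 : B ^ 2 = v j := hasq j
        have hAp : 0 < A := ha jm
        have hBp : 0 < B := ha j
        have hDp : 0 < D := ha i
        have hd1' : B ^ 2 - A ^ 2 ≠ 0 := by rw [hA2, hB2]; exact hd1.ne'
        rw [← hA2, ← hB2]
        field_simp
        ring
      · have hij' : i = j := Fin.ext hij
        subst hij'
        rw [if_pos rfl, hMge i jm (by omega), hMle i i le_rfl]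
        set A := Real.sqrt (v jm) with hA
        set B := Real.sqrt (v i) with hB
        have hA2 : A ^ 2 = v jm := hasq jm
        have hB2 : B ^ 2 = v i := hasq i
        have hAp : 0 < A := ha jm
        have hBp : 0 < B := ha i
        have hd1' : B ^ 2 - A ^ 2 ≠ 0 := by rw [hA2, hB2]; exact hd1.ne'
        rw [← hA2, ← hB2]
        field_simp
        ring
      · have := i.isLt; omega


/-- Theorem 3 of the paper (diagonal dominance for piecewise constant bases): for the
normalized Brownian-motion correlation matrix `M_{ij} = √(v_{min(i,j)}/v_{max(i,j)})` with
`0 < v_1 < … < v_k` (the Gram matrix of any signed subset of standardized indicator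
predictors) and any sign vector `s ∈ {−1,+1}^k`, `M` is invertible and every entry of
`S M⁻¹ S 𝟙` is nonnegative. -/
theorem brownian_gram_sign_diagonal_dominance
    (k : ℕ) (v : Fin k → ℝ) (hpos : ∀ i, 0 < v i) (hmono : StrictMono v)
    (M : Matrix (Fin k) (Fin k) ℝ)
    (hM : ∀ i j, M i j = Real.sqrt (v (min i j) / v (max i j)))
    (s : Fin k → ℝ) (hs : ∀ i, s i = 1 ∨ s i = -1) :
    IsUnit M.det ∧ ∀ i, 0 ≤ ∑ j, s i * M⁻¹ i j * s j := by
  rcases Nat.eq_zero_or_pos k with hk0 | hk0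
  · subst hk0
    refine ⟨?_, fun i => i.elim0⟩
    simp [Matrix.det_fin_zero]
  · obtain ⟨n, rfl⟩ : ∃ n, k = n + 1 := ⟨k - 1, by omega⟩
    have hMN := triN_mul v hpos hmono M hM
    have hdet : IsUnit M.det := Matrix.isUnit_det_of_right_inverse hMN
    have hinv : M⁻¹ = triN n v := Matrix.inv_eq_right_inv hMN
    refine ⟨hdet, fun i => ?_⟩
    rw [hinv]
    have ha : ∀ i, 0 < Real.sqrt (v i) := fun i => Real.sqrt_pos.2 (hpos i)
    have hasq : ∀ i, Real.sqrt (v i) ^ 2 = v i := fun i => Real.sq_sqrt (hpos i).le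
    have halt : ∀ i j : Fin (n+1), (i:ℕ) < (j:ℕ) → Real.sqrt (v i) < Real.sqrt (v j) :=
      fun i j h => Real.sqrt_lt_sqrt (hpos i).le (hmono (Fin.lt_def.mpr h))
    by_cases hi0 : (i:ℕ) = 0
    · by_cases hin : (i:ℕ) < n
      · -- i = 0 < n : support {i, ip}
        obtain ⟨ip, hipv⟩ : ∃ x : Fin (n+1), (x:ℕ) = (i:ℕ)+1 := ⟨⟨(i:ℕ)+1, by omega⟩, rfl⟩
        have hd2 : (0:ℝ) < v ip - v i := sub_pos.2 (hmono (Fin.lt_def.2 (by omega)))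
        have hsum : (∑ j, s i * triN n v i j * s j)
            = ∑ j ∈ ({i, ip} : Finset (Fin (n+1))), s i * triN n v i j * s j := by
          apply sum_eq_sum_subset'
          intro l hl
          simp only [Finset.mem_insert, Finset.mem_singleton] at hl
          push_neg at hl
          have e1 : (i:ℕ) ≠ (l:ℕ) := fun h => hl.1 (Fin.ext h.symm)
          have e2 : (i:ℕ)+1 ≠ (l:ℕ) := fun h => hl.2 (Fin.ext (by omega))
          rw [triN_off v e1 e2 (by omega), mul_zero, zero_mul]
        rw [hsum, Finset.sum_pair (by rw [Fin.ne_iff_vne]; omega),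
            triN_diag, triN_sub v hipv.symm, nqf_eq v hipv.symm,
            qf_eq0 v hi0, qf_eq v hipv.symm]
        set Y := Real.sqrt (v i) with hY
        set Z := Real.sqrt (v ip) with hZ
        have hY2 : Y ^ 2 = v i := hasq i
        have hZ2 : Z ^ 2 = v ip := hasq ip
        have hYp : 0 < Y := ha i
        have hZp : 0 < Z := ha ip
        have hYZ : Y < Z := halt i ip (by omega)
        have hd2' : (0:ℝ) < Z ^ 2 - Y ^ 2 := by rw [hY2, hZ2]; exact hd2
        rw [← hY2, ← hZ2]
        have r0 : Y ^ 2 * (1 / Y ^ 2) = 1 := by field_simp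
        have r2 : Y ^ 2 * (1 / (Z ^ 2 - Y ^ 2)) - Y * Z * (1 / (Z ^ 2 - Y ^ 2))
            = -(Y / (Y + Z)) := by
          field_simp
          ring
        have r4 : Y / (Y + Z) ≤ 1 := by
          rw [div_le_one (by positivity)]; linarith
        have n2 : 0 ≤ Y * Z * (1 / (Z ^ 2 - Y ^ 2)) := by positivity
        rcases hs i with h2 | h2 <;> rcases hs ip with h3 | h3 <;>
          rw [h2, h3] <;> linarith [r0, r2, r4, n2]
      · -- i = 0 = n : support {i}
        have hsum : (∑ j, s i * triN n v i j * s j)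
            = ∑ j ∈ ({i} : Finset (Fin (n+1))), s i * triN n v i j * s j := by
          apply sum_eq_sum_subset'
          intro l hl
          simp only [Finset.mem_singleton] at hl
          have e1 : (i:ℕ) ≠ (l:ℕ) := fun h => hl (Fin.ext h.symm)
          rw [triN_off v e1 (by omega) (by omega), mul_zero, zero_mul]
        rw [hsum, Finset.sum_singleton, triN_diag, nqf_eq0 v hin, qf_eq0 v hi0]
        have hvp := hpos i
        have r0 : v i * (1 / v i + 0) = 1 := by field_simp; ring
        rcases hs i with h2 | h2 <;> rw [h2, r0] <;> norm_num
    · -- i > 0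
      obtain ⟨im, himv⟩ : ∃ x : Fin (n+1), (x:ℕ)+1 = (i:ℕ) :=
        ⟨⟨(i:ℕ)-1, by omega⟩, by simp only [Fin.val_mk]; omega⟩
      have hd1 : (0:ℝ) < v i - v im := sub_pos.2 (hmono (Fin.lt_def.2 (by omega)))
      by_cases hin : (i:ℕ) < n
      · -- interior i : support {im, i, ip}
        obtain ⟨ip, hipv⟩ : ∃ x : Fin (n+1), (x:ℕ) = (i:ℕ)+1 := ⟨⟨(i:ℕ)+1, by omega⟩, rfl⟩
        have hd2 : (0:ℝ) < v ip - v i := sub_pos.2 (hmono (Fin.lt_def.2 (by omega)))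
        have hsum : (∑ j, s i * triN n v i j * s j)
            = ∑ j ∈ ({im, i, ip} : Finset (Fin (n+1))), s i * triN n v i j * s j := by
          apply sum_eq_sum_subset'
          intro l hl
          simp only [Finset.mem_insert, Finset.mem_singleton] at hl
          push_neg at hl
          have e1 : (i:ℕ) ≠ (l:ℕ) := fun h => hl.2.1 (Fin.ext h.symm)
          have e2 : (i:ℕ)+1 ≠ (l:ℕ) := fun h => hl.2.2 (Fin.ext (by omega))
          have e3 : (l:ℕ)+1 ≠ (i:ℕ) := fun h => hl.1 (Fin.ext (by omega))
          rw [triN_off v e1 e2 e3, mul_zero, zero_mul]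
        rw [hsum, Finset.sum_insert (by simp only [Finset.mem_insert,
              Finset.mem_singleton, Fin.ext_iff]; omega),
            Finset.sum_pair (by rw [Fin.ne_iff_vne]; omega),
            triN_diag, triN_sup v himv, triN_sub v hipv.symm,
            nqf_eq v hipv.symm, qf_eq v himv, qf_eq v hipv.symm]
        set X := Real.sqrt (v im) with hX
        set Y := Real.sqrt (v i) with hY
        set Z := Real.sqrt (v ip) with hZ
        have hX2 : X ^ 2 = v im := hasq im
        have hY2 : Y ^ 2 = v i := hasq i
        have hZ2 : Z ^ 2 = v ip := hasq ip
        have hXp : 0 < X := ha im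
        have hYp : 0 < Y := ha i
        have hZp : 0 < Z := ha ip
        have hXY : X < Y := halt im i (by omega)
        have hYZ : Y < Z := halt i ip (by omega)
        have hd1' : (0:ℝ) < Y ^ 2 - X ^ 2 := by rw [hX2, hY2]; exact hd1
        have hd2' : (0:ℝ) < Z ^ 2 - Y ^ 2 := by rw [hY2, hZ2]; exact hd2
        rw [← hX2, ← hY2, ← hZ2]
        have r1 : Y ^ 2 * (1 / (Y ^ 2 - X ^ 2)) - X * Y * (1 / (Y ^ 2 - X ^ 2))
            = Y / (X + Y) := by
          field_simp
          ring
        have r2 : Y ^ 2 * (1 / (Z ^ 2 - Y ^ 2)) - Y * Z * (1 / (Z ^ 2 - Y ^ 2))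
            = -(Y / (Y + Z)) := by
          field_simp
          ring
        have r3 : Y / (Y + Z) ≤ Y / (X + Y) :=
          div_le_div_of_nonneg_left hYp.le (by positivity) (by linarith)
        have n1 : 0 ≤ X * Y * (1 / (Y ^ 2 - X ^ 2)) := by positivity
        have n2 : 0 ≤ Y * Z * (1 / (Z ^ 2 - Y ^ 2)) := by positivity
        rcases hs im with h1 | h1 <;> rcases hs i with h2 | h2 <;>
          rcases hs ip with h3 | h3 <;> rw [h1, h2, h3] <;>
          linarith [r1, r2, r3, n1, n2]
      · -- i = last > 0 : support {im, i}
        have hsum : (∑ j, s i * triN n v i j * s j)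
            = ∑ j ∈ ({im, i} : Finset (Fin (n+1))), s i * triN n v i j * s j := by
          apply sum_eq_sum_subset'
          intro l hl
          simp only [Finset.mem_insert, Finset.mem_singleton] at hl
          push_neg at hl
          have e1 : (i:ℕ) ≠ (l:ℕ) := fun h => hl.2 (Fin.ext h.symm)
          have e2 : (i:ℕ)+1 ≠ (l:ℕ) := by
            have := l.isLt; omega
          have e3 : (l:ℕ)+1 ≠ (i:ℕ) := fun h => hl.1 (Fin.ext (by omega))
          rw [triN_off v e1 e2 e3, mul_zero, zero_mul]
        rw [hsum, Finset.sum_pair (by rw [Fin.ne_iff_vne]; omega),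
            triN_diag, triN_sup v himv, nqf_eq0 v hin, qf_eq v himv]
        set X := Real.sqrt (v im) with hX
        set Y := Real.sqrt (v i) with hY
        have hX2 : X ^ 2 = v im := hasq im
        have hY2 : Y ^ 2 = v i := hasq i
        have hXp : 0 < X := ha im
        have hYp : 0 < Y := ha i
        have hXY : X < Y := halt im i (by omega)
        have hd1' : (0:ℝ) < Y ^ 2 - X ^ 2 := by rw [hX2, hY2]; exact hd1
        rw [← hX2, ← hY2]
        have r1 : Y ^ 2 * (1 / (Y ^ 2 - X ^ 2)) - X * Y * (1 / (Y ^ 2 - X ^ 2))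
            = Y / (X + Y) := by
          field_simp
          ring
        have r5 : (0:ℝ) ≤ Y / (X + Y) := by positivity
        have n1 : 0 ≤ X * Y * (1 / (Y ^ 2 - X ^ 2)) := by positivity
        rcases hs im with h1 | h1 <;> rcases hs i with h2 | h2 <;> rw [h1, h2] <;>
          linarith [r1, r5, n1]
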